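/- Let Ω = {r e^{iθ} : 0 < θ < 1/2, 0 < r < 1 - 2θ} ⊂ 𝔻. Then for all z, w ∈ Ω: (1) 1 - |z| ≤ |1 - z| ≤ (√5/2)(1 - |z|); (2) |Arg((1-z)/(1-w))| ≤ arctan(1/2) < π/4; (3) Re(((1-z)/(1-w))²) ≥ (3/5) |(1-z)/(1-w)|². -/

import Mathlib

open Complex Real

/-- The region `Ω = {r e^{iθ} : 0 < θ < 1/2, 0 < r < 1 - 2θ}`. -/
def Omega : Set ℂ :=
  {z : ℂ | ∃ r θ : ℝ, 0 < θ ∧ θ < 1 / 2 ∧ 0 < r ∧ r < 1 - 2 * θ ∧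
    z = (r : ℂ) * Complex.exp ((θ : ℂ) * Complex.I)}

lemma omega_key (z : ℂ) (hz : z ∈ Omega) :
    0 < (1 - z).re ∧ 0 ≤ -(1 - z).im ∧ 2 * (-(1 - z).im) ≤ (1 - z).re ∧
    ‖z‖ < 1 ∧ ‖1 - z‖ ^ 2 ≤ 5 / 4 * (1 - ‖z‖) ^ 2 := by
  obtain ⟨r, θ, hθ0, hθ2, hr0, hr1, rfl⟩ := hz
  have hre : ((1 : ℂ) - (r : ℂ) * Complex.exp ((θ : ℂ) * Complex.I)).re
      = 1 - r * Real.cos θ := by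
    simp [Complex.sub_re, Complex.mul_re, Complex.exp_ofReal_mul_I_re,
      Complex.exp_ofReal_mul_I_im]
  have him : ((1 : ℂ) - (r : ℂ) * Complex.exp ((θ : ℂ) * Complex.I)).im
      = -(r * Real.sin θ) := by
    simp [Complex.sub_im, Complex.mul_im, Complex.exp_ofReal_mul_I_re,
      Complex.exp_ofReal_mul_I_im]
  have hnorm : ‖(r : ℂ) * Complex.exp ((θ : ℂ) * Complex.I)‖ = r := by
    rw [norm_mul,
      Complex.norm_exp_ofReal_mul_I, Complex.norm_real, Real.norm_eq_abs, abs_of_pos hr0, mul_one]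
  have hs : Real.sin θ ≤ θ := Real.sin_le hθ0.le
  have hsp : 0 ≤ Real.sin θ := Real.sin_nonneg_of_nonneg_of_le_pi hθ0.le
    (by linarith [Real.pi_gt_three])
  have hc1 : Real.cos θ ≤ 1 := Real.cos_le_one θ
  have hc2 : 1 - θ ^ 2 / 2 ≤ Real.cos θ := Real.one_sub_sq_div_two_le_cos
  have hpyth : Real.sin θ ^ 2 + Real.cos θ ^ 2 = 1 := Real.sin_sq_add_cos_sq θ
  refine ⟨?_, ?_, ?_, ?_, ?_⟩
  · rw [hre]; nlinarith
  · rw [him]; simpa using mul_nonneg hr0.le hsp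
  · rw [hre, him]
    nlinarith [mul_nonneg hr0.le (sub_nonneg.2 hc1), mul_nonneg hr0.le (sub_nonneg.2 hs),
      mul_nonneg (by linarith : (0:ℝ) ≤ 1 - 2*θ - r) (by linarith : (0:ℝ) ≤ 1 + 2*θ)]
  · rw [hnorm]; linarith
  · rw [hnorm]
    have hsq : ‖(1 : ℂ) - (r : ℂ) * Complex.exp ((θ : ℂ) * Complex.I)‖ ^ 2
        = (1 - r * Real.cos θ) ^ 2 + (r * Real.sin θ) ^ 2 := by
      rw [Complex.sq_norm, Complex.normSq_apply, hre, him]; ring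
    rw [hsq]
    nlinarith [mul_le_mul_of_nonneg_left hc2 hr0.le, sq_nonneg (1 - r - 2*θ),
      mul_nonneg hr0.le (sq_nonneg (1 - r - 2*θ)), mul_nonneg hr0.le (sq_nonneg θ),
      mul_nonneg (mul_nonneg hr0.le hr0.le) (sq_nonneg θ),
      mul_nonneg hr0.le (mul_nonneg hsp (sub_nonneg.2 hs)),
      mul_nonneg (mul_nonneg hr0.le hr0.le) (mul_nonneg hsp (sub_nonneg.2 hs)),
      mul_nonneg (mul_nonneg hr0.le hr0.le) (mul_nonneg (add_nonneg hsp hθ0.le) (sub_nonneg.2 hs))]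

lemma part3_aux (x y : ℝ) (h : |y| ≤ x / 2) : 3 / 5 * (x ^ 2 + y ^ 2) ≤ x ^ 2 - y ^ 2 := by
  obtain ⟨h1, h2⟩ := abs_le.1 h
  nlinarith [sq_nonneg y]

lemma arg_bound (x : ℂ) (hre : 0 < x.re) (him : 2 * |x.im| ≤ x.re) :
    |Complex.arg x| ≤ Real.arctan (1 / 2) := by
  have h1 : |Complex.arg x| < π / 2 := Complex.abs_arg_lt_pi_div_two_iff.2 (Or.inl hre)
  obtain ⟨h1a, h1b⟩ := abs_lt.1 h1
  have h2 : Complex.arg x = Real.arctan (x.im / x.re) := by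
    rw [← Complex.tan_arg, Real.arctan_tan h1a h1b]
  have hb : |x.im / x.re| ≤ 1 / 2 := by
    rw [abs_div, abs_of_pos hre, div_le_iff₀ hre]
    linarith
  obtain ⟨hb1, hb2⟩ := abs_le.1 hb
  rw [h2]
  refine abs_le.2 ⟨?_, Real.arctan_strictMono.monotone hb2⟩
  have := Real.arctan_strictMono.monotone hb1
  rwa [show (-(1/2) : ℝ) = -(1/2) from rfl, Real.arctan_neg] at this

/-- For `z, w ∈ Ω`: (1) `1 - |z| ≤ |1-z| ≤ (√5/2)(1-|z|)`;
(2) `|Arg((1-z)/(1-w))| ≤ arctan(1/2) < π/4`;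
(3) `Re(((1-z)/(1-w))²) ≥ (3/5)|(1-z)/(1-w)|²`. -/
theorem stmt_18 (z w : ℂ) (hz : z ∈ Omega) (hw : w ∈ Omega) :
    (1 - ‖z‖ ≤ ‖1 - z‖ ∧ ‖1 - z‖ ≤ (Real.sqrt 5 / 2) * (1 - ‖z‖)) ∧
    (|Complex.arg ((1 - z) / (1 - w))| ≤ Real.arctan (1 / 2) ∧
      Real.arctan (1 / 2) < Real.pi / 4) ∧
    (3 / 5) * ‖(1 - z) / (1 - w)‖ ^ 2 ≤ ((((1 - z) / (1 - w))) ^ 2).re := by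
  obtain ⟨haz, hbz, hcz, hnz, hqz⟩ := omega_key z hz
  obtain ⟨haw, hbw, hcw, hnw, hqw⟩ := omega_key w hw
  have hwne : (1 : ℂ) - w ≠ 0 := fun h => by simp [h] at haw
  have hN : 0 < Complex.normSq (1 - w) := Complex.normSq_pos.2 hwne
  set a := (1 - z).re
  set b := -(1 - z).im
  set c := (1 - w).re
  set d := -(1 - w).im
  set q := (1 - z) / (1 - w) with hq
  have hqre : q.re = (a * c + b * d) / Complex.normSq (1 - w) := by
    rw [hq, Complex.div_re]; simp only [a, b, c, d]; ring
  have hqim : q.im = (a * d - b * c) / Complex.normSq (1 - w) := by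
    rw [hq, Complex.div_im]; simp only [a, b, c, d]; ring
  have hX : 0 < a * c + b * d := by positivity
  have hY : 2 * |a * d - b * c| ≤ a * c + b * d := by
    rcases abs_cases (a * d - b * c) with ⟨h, _⟩ | ⟨h, _⟩ <;> rw [h] <;> nlinarith
  have hqre' : 0 < q.re := by rw [hqre]; positivity
  have hqim' : 2 * |q.im| ≤ q.re := by
    rw [hqre, hqim, abs_div, abs_of_pos hN, ← mul_div_assoc, div_le_div_iff₀ hN hN]
    nlinarith [abs_nonneg (a * d - b * c)]
  refine ⟨⟨?_, ?_⟩, ⟨arg_bound q hqre' hqim', ?_⟩, ?_⟩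
  · calc 1 - ‖z‖ = ‖(1 : ℂ)‖ - ‖z‖ := by rw [norm_one]
      _ ≤ ‖1 - z‖ := norm_sub_norm_le _ _
  · have ht : 0 ≤ 1 - ‖z‖ := by linarith
    have h5 : Real.sqrt 5 ^ 2 = 5 := Real.sq_sqrt (by norm_num)
    nlinarith [norm_nonneg (1 - z), Real.sqrt_nonneg 5,
      mul_nonneg (Real.sqrt_nonneg 5) ht,
      sq_nonneg (Real.sqrt 5 / 2 * (1 - ‖z‖) - ‖1 - z‖),
      sq_nonneg (Real.sqrt 5 / 2 * (1 - ‖z‖) + ‖1 - z‖)]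
  · have := Real.arctan_strictMono (show (1:ℝ)/2 < 1 by norm_num)
    rwa [Real.arctan_one] at this
  · have h1 : ((q ^ 2)).re = q.re ^ 2 - q.im ^ 2 := by
      rw [sq, Complex.mul_re]; ring
    have h2 : ‖q‖ ^ 2 = q.re ^ 2 + q.im ^ 2 := by
      rw [Complex.sq_norm, Complex.normSq_apply]; ring
    rw [h1, h2]
    exact part3_aux q.re q.im (by linarith [hqim', abs_nonneg q.im] : |q.im| ≤ q.re / 2)
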